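/- Let Δ ≥ 1 and D ≥ 1 be integers. Consider minimizing f(μ′, ς′) = 1 + (μ′ − 1)Δ + ς′ over integer pairs (μ′, ς′) with μ′ ≥ 1, 0 ≤ ς′ ≤ Δ − 1, and μ′ + Δ(μ′ − 1)μ′ + 2ς′μ′ ≥ D + 1. Define μ = ⌊ (Δ − 1 + √(Δ² + 2Δ + 4DΔ + 1)) / (2Δ) ⌋ and ς̄ = ⌈ (D + 1 − (μ²Δ − μΔ + μ)) / (2μ) ⌉. Then μ ≥ 1, 0 ≤ ς̄ ≤ Δ, the minimum value of f over the feasible set equals 1 + (μ − 1)Δ + ς̄, and whenever ς̄ < Δ the pair (μ, ς̄) is feasible and attains this minimum. -/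
import Mathlib
set_option maxHeartbeats 2000000


theorem stmt14 (Δ D : ℕ) (hΔ : 1 ≤ Δ) (hD : 1 ≤ D)
    (μ : ℕ)
    (hμdef : μ = ⌊((Δ : ℝ) - 1 + Real.sqrt ((Δ : ℝ) ^ 2 + 2 * Δ + 4 * D * Δ + 1))
        / (2 * Δ)⌋₊)
    (ς : ℤ)
    (hςdef : ς = ⌈(((D : ℝ) + 1 - ((μ : ℝ) ^ 2 * Δ - μ * Δ + μ)) / (2 * μ))⌉) :
    1 ≤ μ ∧ 0 ≤ ς ∧ ς ≤ (Δ : ℤ) ∧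
    IsLeast {y : ℤ | ∃ μ' ς' : ℕ, 1 ≤ μ' ∧ (ς' : ℤ) ≤ (Δ : ℤ) - 1 ∧
        (D : ℤ) + 1 ≤ (μ' : ℤ) + Δ * ((μ' : ℤ) - 1) * μ' + 2 * ς' * μ' ∧
        y = 1 + ((μ' : ℤ) - 1) * Δ + ς'}
      (1 + ((μ : ℤ) - 1) * Δ + ς) ∧
    (ς < (Δ : ℤ) →
      (D : ℤ) + 1 ≤ (μ : ℤ) + Δ * ((μ : ℤ) - 1) * μ + 2 * ς * μ) := by
  have hΔR : (1:ℝ) ≤ (Δ:ℝ) := by exact_mod_cast hΔ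
  have hDR : (1:ℝ) ≤ (D:ℝ) := by exact_mod_cast hD
  set s : ℝ := Real.sqrt ((Δ : ℝ) ^ 2 + 2 * Δ + 4 * D * Δ + 1) with hs_def
  have hs0 : 0 ≤ s := Real.sqrt_nonneg _
  have hs2 : s ^ 2 = (Δ : ℝ) ^ 2 + 2 * Δ + 4 * D * Δ + 1 := by
    rw [hs_def]
    exact Real.sq_sqrt (by nlinarith)
  have h2Δ : (0:ℝ) < 2 * Δ := by linarith
  have hargnn : 0 ≤ ((Δ : ℝ) - 1 + s) / (2 * Δ) := by
    apply div_nonneg (by linarith) (by linarith)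
  have hfl : (μ:ℝ) ≤ ((Δ : ℝ) - 1 + s) / (2 * Δ) := by
    rw [hμdef]; exact Nat.floor_le hargnn
  have hfu : ((Δ : ℝ) - 1 + s) / (2 * Δ) < (μ:ℝ) + 1 := by
    rw [hμdef]
    exact Nat.lt_floor_add_one _
  have hfl' : (μ:ℝ) * (2*Δ) ≤ (Δ : ℝ) - 1 + s := by
    rw [← le_div_iff₀ h2Δ]; exact hfl
  have hfu' : (Δ : ℝ) - 1 + s < ((μ:ℝ) + 1) * (2*Δ) := by
    rw [← div_lt_iff₀ h2Δ]; exact hfu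
  have hsge : (Δ:ℝ) - 1 ≤ s := by nlinarith
  have hμnn : (0:ℝ) ≤ (μ:ℝ) := by positivity
  -- h1 : Δ μ² − (Δ−1) μ ≤ D + 1  (in ℝ, then ℤ)
  have h1R : (Δ:ℝ) * μ^2 - ((Δ:ℝ) - 1) * μ ≤ (D:ℝ) + 1 := by
    have ht : (2*(Δ:ℝ)*μ - ((Δ:ℝ)-1)) ≤ s := by linarith
    have hts : 0 ≤ s + (2*(Δ:ℝ)*μ - ((Δ:ℝ)-1)) := by nlinarith
    nlinarith [mul_nonneg (sub_nonneg.mpr ht) hts]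
  have h2R : (D:ℝ) + 1 < (Δ:ℝ) * (μ+1)^2 - ((Δ:ℝ) - 1) * (μ+1) := by
    have hu : s < 2*(Δ:ℝ)*((μ:ℝ)+1) - ((Δ:ℝ)-1) := by linarith
    nlinarith [mul_pos (sub_pos.mpr hu) (by nlinarith : (0:ℝ) < s + (2*(Δ:ℝ)*((μ:ℝ)+1) - ((Δ:ℝ)-1)))]
  have h1 : (Δ:ℤ) * μ^2 - ((Δ:ℤ) - 1) * μ ≤ (D:ℤ) + 1 := by exact_mod_cast h1R
  have h2 : (D:ℤ) + 1 < (Δ:ℤ) * ((μ:ℤ)+1)^2 - ((Δ:ℤ) - 1) * ((μ:ℤ)+1) := by exact_mod_cast h2R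
  -- μ ≥ 1
  have hμ1 : 1 ≤ μ := by
    by_contra hcon
    interval_cases μ
    · simp at h2; omega
  have hμ1Z : (1:ℤ) ≤ (μ:ℤ) := by exact_mod_cast hμ1
  have hμ1R : (1:ℝ) ≤ (μ:ℝ) := by exact_mod_cast hμ1
  have h2μ : (0:ℝ) < 2 * μ := by linarith
  -- ceil facts
  set x : ℝ := ((D : ℝ) + 1 - ((μ : ℝ) ^ 2 * Δ - μ * Δ + μ)) / (2 * μ) with hx_def
  have hcl : x ≤ (ς:ℝ) := by rw [hςdef]; exact Int.le_ceil x
  have hcu : (ς:ℝ) < x + 1 := by rw [hςdef]; exact Int.ceil_lt_add_one x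
  have h3R : (D:ℝ) + 1 - ((μ:ℝ)^2 * Δ - μ * Δ + μ) ≤ 2 * μ * ς := by
    have := (div_le_iff₀ h2μ).mp hcl
    linarith
  have h4R : 2 * (μ:ℝ) * ((ς:ℝ) - 1) < (D:ℝ) + 1 - ((μ:ℝ)^2 * Δ - μ * Δ + μ) := by
    have : ((ς:ℝ) - 1) < x := by linarith
    have := (lt_div_iff₀ h2μ).mp this
    linarith
  have h3 : (D:ℤ) + 1 - ((μ:ℤ)^2 * Δ - (μ:ℤ) * Δ + μ) ≤ 2 * μ * ς := by exact_mod_cast h3R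
  have h4 : 2 * (μ:ℤ) * (ς - 1) < (D:ℤ) + 1 - ((μ:ℤ)^2 * Δ - (μ:ℤ) * Δ + μ) := by
    exact_mod_cast h4R
  have hΔZ : (1:ℤ) ≤ (Δ:ℤ) := by exact_mod_cast hΔ
  have hDZ : (1:ℤ) ≤ (D:ℤ) := by exact_mod_cast hD
  clear hcl hcu h3R h4R hx_def
  clear hfl hfu hfl' hfu' h1R h2R hsge hs2 hs0 hargnn h2Δ h2μ hΔR hDR hμnn hμ1R hςdef hμdef
  clear_value s x
  clear hs_def s x
  -- ς ≥ 0
  have hς0 : 0 ≤ ς := by nlinarith [h1, h3, hμ1Z]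
  -- ς ≤ Δ
  have hςΔ : ς ≤ (Δ:ℤ) := by nlinarith [h2, h4, hμ1Z]
  refine ⟨hμ1, hς0, hςΔ, ⟨?_, ?_⟩, ?_⟩
  · -- membership
    by_cases hc : ς < (Δ:ℤ)
    · refine ⟨μ, ς.toNat, hμ1, ?_, ?_, ?_⟩
      · rw [Int.toNat_of_nonneg hς0]; omega
      · rw [Int.toNat_of_nonneg hς0]; nlinarith
      · rw [Int.toNat_of_nonneg hς0]
    · have hceq : ς = (Δ:ℤ) := le_antisymm hςΔ (by omega)
      refine ⟨μ + 1, 0, by omega, by push_cast; omega, ?_, ?_⟩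
      · push_cast; nlinarith
      · push_cast; rw [hceq]; ring
  · -- lower bound
    rintro y ⟨μ', ς', h1', h2', h3', rfl⟩
    have ha1 : (1:ℤ) ≤ (μ':ℤ) := by exact_mod_cast h1'
    have hb0 : (0:ℤ) ≤ (ς':ℤ) := by positivity
    rcases lt_trichotomy ((μ':ℤ)) ((μ:ℤ)) with hlt | heq | hgt
    · exfalso
      have ham : (μ':ℤ) + 1 ≤ (μ:ℤ) := by omega
      -- g(μ'+1,0) ≤ g(μ,0)
      have hmono : (Δ:ℤ) * ((μ':ℤ)+1)^2 - ((Δ:ℤ)-1) * ((μ':ℤ)+1) ≤ (Δ:ℤ) * μ^2 - ((Δ:ℤ)-1) * μ := by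
        nlinarith [mul_nonneg (sub_nonneg.mpr ham) (by nlinarith : (0:ℤ) ≤ (Δ:ℤ) * ((μ:ℤ) + (μ':ℤ) + 1) - ((Δ:ℤ) - 1))]
      nlinarith [mul_le_mul_of_nonneg_right h2' (by linarith : (0:ℤ) ≤ 2 * (μ':ℤ))]
    · -- μ' = μ : ς ≤ ς'
      rw [heq] at h3'
      have hbς : ς ≤ (ς':ℤ) := by
        by_contra hcon
        push_neg at hcon
        have hle : (ς':ℤ) ≤ ς - 1 := by omega
        nlinarith [mul_le_mul_of_nonneg_left hle (by linarith : (0:ℤ) ≤ 2 * (μ:ℤ))]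
      rw [heq]; linarith
    · have hgm : (μ:ℤ) + 1 ≤ (μ':ℤ) := by omega
      have : (μ:ℤ) * Δ ≤ ((μ':ℤ) - 1) * Δ := by nlinarith
      linarith
  · -- last part
    intro _
    nlinarith
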